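/- (Azuma's inequality for supermartingales) Let (Y_i) be a supermartingale with respect to a filtration (F_i), and let (c_i) be positive reals with |Y_{i+1}(ω) − Y_i(ω)| ≤ c_i for all i and ω. Then for every n ∈ ℕ and t > 0, P[Y_n − Y_0 ≥ t] ≤ exp(−t² / (2·Σ_{i=0}^{n−1} c_i²)). -/

import Mathlib

open MeasureTheory Filter Real

/-- Convexity bound: for `|u| ≤ s`, `exp u ≤ cosh s + (u/s) * sinh s`. -/
lemma azuma_exp_le_cosh_add {s u : ℝ} (hs : 0 < s) (hu : |u| ≤ s) :
    Real.exp u ≤ Real.cosh s + (u / s) * Real.sinh s := by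
  obtain ⟨hu1, hu2⟩ := abs_le.1 hu
  have ha : (0:ℝ) ≤ (s - u) / (2 * s) := div_nonneg (by linarith) (by linarith)
  have hb : (0:ℝ) ≤ (s + u) / (2 * s) := div_nonneg (by linarith) (by linarith)
  have hab : (s - u) / (2 * s) + (s + u) / (2 * s) = 1 := by field_simp; ring
  have key := convexOn_exp.2 (Set.mem_univ (-s)) (Set.mem_univ s) ha hb hab
  simp only [smul_eq_mul] at key
  have h1 : (s - u) / (2 * s) * (-s) + (s + u) / (2 * s) * s = u := by
    field_simp; ring
  rw [h1] at key
  refine key.trans_eq ?_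
  rw [Real.cosh_eq, Real.sinh_eq]
  field_simp
  ring

/-- Integrability of `exp (l * f)` for bounded measurable `f`. -/
lemma azuma_integrable_exp {Ω : Type*} {m0 : MeasurableSpace Ω} {μ : Measure Ω}
    [IsProbabilityMeasure μ] {f : Ω → ℝ} (hf : AEStronglyMeasurable f μ)
    {C : ℝ} (h : ∀ ω, |f ω| ≤ C) (l : ℝ) :
    Integrable (fun ω => Real.exp (l * f ω)) μ := by
  refine (integrable_const (Real.exp (|l| * C))).mono'
    (Real.continuous_exp.comp_aestronglyMeasurable (hf.const_mul l)) ?_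
  filter_upwards with ω
  rw [Real.norm_eq_abs, abs_of_pos (Real.exp_pos _), Real.exp_le_exp]
  calc l * f ω ≤ |l * f ω| := le_abs_self _
    _ = |l| * |f ω| := abs_mul _ _
    _ ≤ |l| * C := by
        have := (abs_nonneg (f ω)).trans (h ω)
        exact mul_le_mul_of_nonneg_left (h ω) (abs_nonneg l)

theorem azuma_supermartingale
    {Ω : Type*} {m0 : MeasurableSpace Ω} {μ : Measure Ω} [IsProbabilityMeasure μ]
    (ℱ : Filtration ℕ m0) (Y : ℕ → Ω → ℝ)
    (hY : Supermartingale Y ℱ μ)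
    (c : ℕ → ℝ) (hc : ∀ i, 0 < c i)
    (hbdd : ∀ i : ℕ, ∀ ω : Ω, |Y (i + 1) ω - Y i ω| ≤ c i) :
    ∀ n : ℕ, ∀ t : ℝ, 0 < t →
      (μ {ω | t ≤ Y n ω - Y 0 ω}).toReal ≤
        Real.exp (-t ^ 2 / (2 * ∑ i ∈ Finset.range n, (c i) ^ 2)) := by
  -- basic measurability facts
  have hmeas : ∀ n, StronglyMeasurable[ℱ n] (Y n) := fun n => hY.stronglyAdapted n
  have hmeas0 : ∀ n, AEStronglyMeasurable (Y n) μ :=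
    fun n => ((hmeas n).mono (ℱ.le n)).aestronglyMeasurable
  -- telescoping bound
  have htel : ∀ n ω, |Y n ω - Y 0 ω| ≤ ∑ i ∈ Finset.range n, c i := by
    intro n
    induction n with
    | zero => intro ω; simp
    | succ n ih =>
      intro ω
      rw [Finset.sum_range_succ]
      calc |Y (n + 1) ω - Y 0 ω| = |(Y n ω - Y 0 ω) + (Y (n + 1) ω - Y n ω)| := by ring_nf
        _ ≤ |Y n ω - Y 0 ω| + |Y (n + 1) ω - Y n ω| := abs_add_le _ _
        _ ≤ ∑ i ∈ Finset.range n, c i + c n := add_le_add (ih ω) (hbdd n ω)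
  -- conditional Hoeffding step
  have hstep : ∀ (l : ℝ), 0 ≤ l → ∀ n,
      μ[(fun ω => Real.exp (l * (Y (n + 1) ω - Y n ω)))|ℱ n]
        ≤ᵐ[μ] fun _ => Real.exp (l ^ 2 * c n ^ 2 / 2) := by
    intro l hl n
    rcases eq_or_lt_of_le hl with rfl | hl
    · have h0 : (fun ω => Real.exp (0 * (Y (n + 1) ω - Y n ω))) = fun _ : Ω => (1:ℝ) := by
        ext ω; simp
      rw [h0, condExp_const (ℱ.le n)]
      refine Filter.Eventually.of_forall fun ω => ?_
      simp
    · set s := l * c n with hs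
      have hspos : 0 < s := mul_pos hl (hc n)
      set D := fun ω => Y (n + 1) ω - Y n ω with hD
      have hDint : Integrable D μ := (hY.integrable (n + 1)).sub (hY.integrable n)
      have hDmeas : AEStronglyMeasurable D μ := (hmeas0 (n + 1)).sub (hmeas0 n)
      -- pointwise bound
      have hpt : ∀ ω, Real.exp (l * D ω) ≤
          Real.cosh s + (Real.sinh s / c n) * D ω := by
        intro ω
        have habs : |l * D ω| ≤ s := by
          rw [abs_mul, abs_of_pos hl]
          exact mul_le_mul_of_nonneg_left (hbdd n ω) hl.le
        have := azuma_exp_le_cosh_add hspos habs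
        refine this.trans_eq ?_
        have h2 : l * D ω / s = D ω / c n := by
          rw [hs, mul_div_mul_left _ _ hl.ne']
        rw [h2]; ring
      -- the dominating function
      set g : Ω → ℝ := (fun _ => Real.cosh s) + (Real.sinh s / c n) • D with hg
      have hgapp : ∀ ω, g ω = Real.cosh s + (Real.sinh s / c n) * D ω := by
        intro ω; simp [hg]
      have hgint : Integrable g μ :=
        (integrable_const _).add (hDint.smul _)
      have hexpint : Integrable (fun ω => Real.exp (l * D ω)) μ :=
        azuma_integrable_exp hDmeas (fun ω => hbdd n ω) l
      have hmono := condExp_mono (m := ℱ n) hexpint hgint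
        (Filter.Eventually.of_forall fun ω => (hpt ω).trans_eq (hgapp ω).symm)
      -- compute condexp of g
      have hgcond : μ[g|ℱ n] =ᵐ[μ] fun ω =>
          Real.cosh s + (Real.sinh s / c n) * ((μ[D|ℱ n]) ω) := by
        have h1 := condExp_add (μ := μ) (m := ℱ n) (integrable_const (Real.cosh s))
          (hDint.smul (Real.sinh s / c n))
        have h2 : μ[(fun _ : Ω => Real.cosh s)|ℱ n] = fun _ => Real.cosh s :=
          condExp_const (ℱ.le n) _
        have h3 := condExp_smul (μ := μ) (m := ℱ n) (Real.sinh s / c n) D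
        filter_upwards [h1, h3] with ω hω1 hω3
        rw [hg]
        rw [hω1]
        simp only [Pi.add_apply, h2, hω3, Pi.smul_apply, smul_eq_mul]
      -- condexp of D is ≤ 0
      have hDcond : μ[D|ℱ n] ≤ᵐ[μ] 0 := by
        have h1 : μ[D|ℱ n] =ᵐ[μ] μ[Y (n + 1)|ℱ n] - μ[Y n|ℱ n] :=
          condExp_sub (hY.integrable (n + 1)) (hY.integrable n) _
        have h2 : μ[Y n|ℱ n] = Y n :=
          condExp_of_stronglyMeasurable (ℱ.le n) (hmeas n) (hY.integrable n)
        have h3 : μ[Y (n + 1)|ℱ n] ≤ᵐ[μ] Y n := hY.condExp_ae_le (Nat.le_succ n)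
        filter_upwards [h1, h3] with ω hω1 hω3
        simp only [Pi.zero_apply]
        rw [hω1]
        simp only [Pi.sub_apply, h2]
        linarith
      refine hmono.trans ?_
      filter_upwards [hgcond, hDcond] with ω hω1 hω2
      rw [hω1]
      have hsinh : 0 ≤ Real.sinh s := Real.sinh_nonneg_iff.2 hspos.le
      have : (Real.sinh s / c n) * ((μ[D|ℱ n]) ω) ≤ 0 :=
        mul_nonpos_of_nonneg_of_nonpos (div_nonneg hsinh (hc n).le) hω2
      calc Real.cosh s + (Real.sinh s / c n) * ((μ[D|ℱ n]) ω) ≤ Real.cosh s := by linarith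
        _ ≤ Real.exp (s ^ 2 / 2) := Real.cosh_le_exp_half_sq s
        _ = Real.exp (l ^ 2 * c n ^ 2 / 2) := by rw [hs]; ring_nf
  -- mgf bound by induction
  have hmgf : ∀ (l : ℝ), 0 ≤ l → ∀ n,
      ∫ ω, Real.exp (l * (Y n ω - Y 0 ω)) ∂μ ≤
        Real.exp (l ^ 2 * (∑ i ∈ Finset.range n, c i ^ 2) / 2) := by
    intro l hl n
    induction n with
    | zero => simp
    | succ n ih =>
      set f := fun ω => Real.exp (l * (Y n ω - Y 0 ω)) with hf
      set g := fun ω => Real.exp (l * (Y (n + 1) ω - Y n ω)) with hg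
      have hfg : ∀ ω, Real.exp (l * (Y (n + 1) ω - Y 0 ω)) = f ω * g ω := by
        intro ω
        rw [hf, hg, ← Real.exp_add]
        ring_nf
      have hfmeas : StronglyMeasurable[ℱ n] f := by
        apply Real.continuous_exp.comp_stronglyMeasurable
        exact ((hmeas n).sub ((hmeas 0).mono (ℱ.mono (Nat.zero_le n)))).const_mul l
      have hfgint : Integrable (fun ω => f ω * g ω) μ := by
        simp_rw [← hfg]
        exact azuma_integrable_exp ((hmeas0 (n + 1)).sub (hmeas0 0))
          (C := ∑ i ∈ Finset.range (n + 1), c i) (htel (n + 1)) l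
      have hgint : Integrable g μ :=
        azuma_integrable_exp ((hmeas0 (n + 1)).sub (hmeas0 n)) (fun ω => hbdd n ω) l
      have hfint : Integrable f μ :=
        azuma_integrable_exp ((hmeas0 n).sub (hmeas0 0)) (htel n) l
      have hfnonneg : ∀ ω, 0 ≤ f ω := fun ω => (Real.exp_pos _).le
      -- pull-out property
      have hpull : μ[(fun ω => f ω * g ω)|ℱ n] =ᵐ[μ] fun ω => f ω * ((μ[g|ℱ n]) ω) :=
        condExp_mul_of_stronglyMeasurable_left hfmeas hfgint hgint
      have hint_eq : ∫ ω, f ω * g ω ∂μ = ∫ ω, f ω * ((μ[g|ℱ n]) ω) ∂μ := by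
        rw [← integral_condExp (ℱ.le n) (f := fun ω => f ω * g ω)]
        exact integral_congr_ae hpull
      set K := Real.exp (l ^ 2 * c n ^ 2 / 2) with hK
      have hKpos : 0 < K := Real.exp_pos _
      have hbound : ∫ ω, f ω * ((μ[g|ℱ n]) ω) ∂μ ≤ ∫ ω, f ω * K ∂μ := by
        refine integral_mono_ae ?_ (hfint.mul_const K) ?_
        · exact integrable_condExp.congr hpull
        · filter_upwards [hstep l hl n] with ω hω
          exact mul_le_mul_of_nonneg_left hω (hfnonneg ω)
      calc ∫ ω, Real.exp (l * (Y (n + 1) ω - Y 0 ω)) ∂μ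
          = ∫ ω, f ω * g ω ∂μ := by simp_rw [hfg]
        _ = ∫ ω, f ω * ((μ[g|ℱ n]) ω) ∂μ := hint_eq
        _ ≤ ∫ ω, f ω * K ∂μ := hbound
        _ = (∫ ω, f ω ∂μ) * K := integral_mul_const K f
        _ ≤ Real.exp (l ^ 2 * (∑ i ∈ Finset.range n, c i ^ 2) / 2) * K :=
            mul_le_mul_of_nonneg_right ih hKpos.le
        _ = Real.exp (l ^ 2 * (∑ i ∈ Finset.range (n + 1), c i ^ 2) / 2) := by
            rw [hK, ← Real.exp_add, Finset.sum_range_succ]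
            congr 1
            ring
  -- main conclusion
  intro n t ht
  rcases Nat.eq_zero_or_pos n with rfl | hn
  · have : {ω | t ≤ Y 0 ω - Y 0 ω} = ∅ := by
      ext ω; simp only [Set.mem_setOf_eq, Set.mem_empty_iff_false, iff_false, not_le]
      linarith
    rw [this]
    simp [Real.exp_nonneg]
  · set S := ∑ i ∈ Finset.range n, c i ^ 2 with hS
    have hSpos : 0 < S := Finset.sum_pos (fun i _ => pow_pos (hc i) 2)
      (Finset.nonempty_range_iff.2 (by omega : n ≠ 0))
    set l := t / S with hl
    have hlpos : 0 < l := div_pos ht hSpos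
    have hint : Integrable (fun ω => Real.exp (l * (Y n ω - Y 0 ω))) μ :=
      azuma_integrable_exp ((hmeas0 n).sub (hmeas0 0)) (htel n) l
    have hcher := ProbabilityTheory.measure_ge_le_exp_mul_mgf
      (X := fun ω => Y n ω - Y 0 ω) (μ := μ) t hlpos.le hint
    refine hcher.trans ?_
    have hmgf_le : ProbabilityTheory.mgf (fun ω => Y n ω - Y 0 ω) μ l ≤
        Real.exp (l ^ 2 * S / 2) := hmgf l hlpos.le n
    calc Real.exp (-l * t) * ProbabilityTheory.mgf (fun ω => Y n ω - Y 0 ω) μ l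
        ≤ Real.exp (-l * t) * Real.exp (l ^ 2 * S / 2) :=
          mul_le_mul_of_nonneg_left hmgf_le (Real.exp_nonneg _)
      _ = Real.exp (-l * t + l ^ 2 * S / 2) := (Real.exp_add _ _).symm
      _ = Real.exp (-t ^ 2 / (2 * S)) := by
          congr 1
          rw [hl]
          field_simp
          ring
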